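/- Let R = GR(4, 4^r), G₁ = ⟨ξ⟩ the cyclic group of units of order 2^r − 1, T : R → Z₄ the trace, ω = i, and ζ_γ = Σ_{s∈G₁} ω^{T(γs)}. If γ ∈ 2R with γ ≠ 0 (i.e., γ is a nonzero non-unit), then ζ_γ = −1. -/

import Mathlib

open Finset Polynomial

private lemma aux_I_pow_val_add (a b : ZMod 4) :
    Complex.I ^ (a + b).val = Complex.I ^ a.val * Complex.I ^ b.val := by
  rw [ZMod.val_add, ← pow_add]
  exact (pow_eq_pow_mod _ Complex.I_pow_four).symm

private lemma aux_I_pow_val_eq_one {a : ZMod 4} (h : Complex.I ^ a.val = 1) : a = 0 := by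
  have hval : a.val < 4 := a.val_lt
  have hI : Complex.I ^ 1 ≠ 1 := by
    intro h; rw [pow_one] at h; simpa using congrArg Complex.im h
  have hI3 : Complex.I ^ 3 ≠ 1 := by
    intro h
    rw [pow_succ, Complex.I_sq] at h
    have := congrArg Complex.im h
    simp at this
  have hI2 : Complex.I ^ 2 ≠ 1 := by
    rw [Complex.I_sq]; intro h; norm_num at h
  interval_cases h' : a.val
  · exact (ZMod.val_eq_zero a).mp h'
  · exact absurd h hI
  · exact absurd h hI2
  · exact absurd h hI3

/-- In `R = GR(4, 4^r)` with `ξ` of order `2^r - 1`, Frobenius `φ`, trace `T : R → Z₄`, and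
`ζ_γ = Σ_{s ∈ G₁} i^{T(γ s)}`: if `γ` is a nonzero non-unit (i.e. `γ ∈ 2R`, `γ ≠ 0`),
then `ζ_γ = -1`. -/
theorem stmt11 (r : ℕ)
    (R : Type) [CommRing R] [Fintype R] [CharP R 4]
    (hcard : Fintype.card R = 4 ^ r)
    (hlocal : ∀ x : R, ¬ IsUnit x ↔ x ∈ Ideal.span {(2 : R)})
    (ξ : R) (hξ : orderOf ξ = 2 ^ r - 1)
    (φ : R ≃+* R) (hφ : φ ξ = ξ ^ 2)
    (T : R → ZMod 4)
    (hT : ∀ x : R, (ZMod.castHom (dvd_refl 4) R) (T x) = ∑ i ∈ Finset.range r, (⇑φ)^[i] x)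
    (γ : R) (hγ : γ ∈ Ideal.span {(2 : R)}) (hγ0 : γ ≠ 0) :
    (∑ k ∈ Finset.range (2 ^ r - 1), Complex.I ^ (T (γ * ξ ^ k)).val) = -1 := by
  classical
  haveI : Nontrivial R := CharP.nontrivial_of_char_ne_one (by norm_num : (4:ℕ) ≠ 1)
  have h4 : (2 : R) * 2 = 0 := by
    have h40 : ((4 : ℕ) : R) = 0 := CharP.cast_eq_zero R 4
    push_cast at h40
    linear_combination h40
  obtain ⟨δ, hδ⟩ : ∃ δ, γ = 2 * δ := Ideal.mem_span_singleton.mp hγ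
  have h2ne : (2 : R) ≠ 0 := by
    intro h
    exact hγ0 (by rw [hδ, h, zero_mul])
  have hr : 1 ≤ r := by
    by_contra h
    push_neg at h
    interval_cases r
    have h1 : Fintype.card R = 1 := by simpa using hcard
    have : Subsingleton R := Fintype.card_le_one_iff_subsingleton.mp h1.le
    exact h2ne (Subsingleton.elim _ _)
  have horder_pos : 1 ≤ 2 ^ r - 1 := by
    have : 2 ≤ 2 ^ r := by
      calc 2 = 2 ^ 1 := (pow_one 2).symm
      _ ≤ 2 ^ r := Nat.pow_le_pow_right (by norm_num) hr
    omega
  -- annihilator of 2 is exactly 2R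
  have h2ann : ∀ x : R, 2 * x = 0 ↔ x ∈ Ideal.span {(2 : R)} := by
    intro x
    constructor
    · intro hx
      rw [← hlocal]
      intro hu
      obtain ⟨u, rfl⟩ := hu
      have h2 : (2 : R) = 0 := by
        have := congrArg (· * (↑u⁻¹ : R)) hx
        simpa [mul_assoc] using this
      exact h2ne h2
    · intro hx
      obtain ⟨c, rfl⟩ := Ideal.mem_span_singleton.mp hx
      rw [← mul_assoc, h4, zero_mul]
  have hδu : IsUnit δ := by
    by_contra h
    rw [hlocal] at h
    obtain ⟨e, rfl⟩ := Ideal.mem_span_singleton.mp h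
    exact hγ0 (by rw [hδ, ← mul_assoc, h4, zero_mul])
  -- ξ is a unit
  have hξ1 : ξ ^ (2 ^ r - 1) = 1 := by rw [← hξ]; exact pow_orderOf_eq_one ξ
  have hξu : IsUnit ξ := by
    apply IsUnit.of_mul_eq_one (a := ξ) (ξ ^ (2 ^ r - 2))
    rw [← pow_succ']
    have h21 : 2 ^ r - 2 + 1 = 2 ^ r - 1 := by omega
    rw [h21, hξ1]
  -- key divisibility lemma
  have hkey : ∀ d : ℕ, ξ ^ d - 1 ∈ Ideal.span {(2 : R)} → (2 ^ r - 1) ∣ d := by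
    intro d hd
    obtain ⟨t, ht⟩ := Ideal.mem_span_singleton.mp hd
    have hxd : ξ ^ d = 1 + 2 * t := by linear_combination ht
    have hsq : ξ ^ (2 * d) = 1 := by
      rw [mul_comm 2 d, pow_mul, hxd]
      linear_combination (t + t * t) * h4
    have hdvd : (2 ^ r - 1) ∣ 2 * d := by
      rw [← hξ]; exact orderOf_dvd_of_pow_eq_one hsq
    have hodd : Nat.Coprime (2 ^ r - 1) 2 := by
      rw [Nat.coprime_comm]
      rw [Nat.Prime.coprime_iff_not_dvd Nat.prime_two]
      have h2p : (2:ℕ) ∣ 2 ^ r := dvd_pow_self 2 (by omega)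
      omega
    exact hodd.dvd_of_dvd_mul_left hdvd
  -- cancellation for powers of ξ against γ
  have hcancel : ∀ j k : ℕ, j ≤ k → k - j < 2 ^ r - 1 → γ * ξ ^ j = γ * ξ ^ k → j = k := by
    intro j k hjk hlt he
    have hkj : ξ ^ k = ξ ^ j * ξ ^ (k - j) := by
      rw [← pow_add]; congr 1; omega
    have hz : (2 - 2 * ξ ^ (k - j)) * (δ * ξ ^ j) = 0 := by
      rw [hδ, hkj] at he
      linear_combination he
    have h2z : 2 * (ξ ^ (k - j) - 1) = 0 := by
      have h0 := ((hδu.mul (hξu.pow j)).mul_left_eq_zero).mp hz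
      linear_combination -h0
    have hdvd := hkey _ ((h2ann _).mp h2z)
    rcases Nat.eq_zero_or_pos (k - j) with h | h
    · omega
    · exact absurd (Nat.le_of_dvd h hdvd) (by omega)
  -- additivity of iterates and of T
  have hiter_add : ∀ (i : ℕ) (a b : R), (⇑φ)^[i] (a + b) = (⇑φ)^[i] a + (⇑φ)^[i] b := by
    intro i
    induction i with
    | zero => intro a b; simp
    | succ n ih =>
      intro a b
      rw [Function.iterate_succ_apply, Function.iterate_succ_apply,
        Function.iterate_succ_apply, map_add]
      exact ih _ _
  have hcast_inj : Function.Injective (ZMod.castHom (dvd_refl 4) R) := ZMod.castHom_injective R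
  have hTadd : ∀ a b : R, T (a + b) = T a + T b := by
    intro a b
    apply hcast_inj
    rw [map_add, hT, hT, hT, ← Finset.sum_add_distrib]
    exact Finset.sum_congr rfl fun i _ => hiter_add i a b
  have hT0 : T 0 = 0 := by
    apply hcast_inj
    rw [hT, map_zero]
    apply Finset.sum_eq_zero
    intro i _
    have h00 := hiter_add i 0 0
    rw [add_zero] at h00
    exact (left_eq_add.mp h00)
  -- the character
  set χ : R → ℂ := fun x => Complex.I ^ (T x).val with hχ
  have hχadd : ∀ a b : R, χ (a + b) = χ a * χ b := by
    intro a b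
    show Complex.I ^ (T (a+b)).val = Complex.I ^ (T a).val * Complex.I ^ (T b).val
    rw [hTadd, aux_I_pow_val_add]
  have hχ0 : χ 0 = 1 := by
    show Complex.I ^ (T 0).val = 1
    rw [hT0]
    simp
  -- nondegeneracy: there is a ∈ ann(2) with T a ≠ 0
  have hex : ∃ a : R, 2 * a = 0 ∧ T a ≠ 0 := by
    by_contra hcon
    push_neg at hcon
    have htr2 : ∀ y : R, (ZMod.castHom (dvd_refl 4) R) (T y) ∈ Ideal.span {(2:R)} := by
      intro y
      have h2y : 2 * (2 * y) = 0 := by rw [← mul_assoc, h4, zero_mul]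
      have hty : T (2 * y) = 0 := hcon _ h2y
      have hsplit : T (2 * y) = T y + T y := by
        rw [show (2:R) * y = y + y from two_mul y, hTadd]
      rw [hsplit] at hty
      rw [← h2ann]
      have hc := congrArg (ZMod.castHom (dvd_refl 4) R) hty
      rw [map_add, map_zero] at hc
      linear_combination hc
    have hmax : (Ideal.span {(2:R)}).IsMaximal := by
      rw [Ideal.isMaximal_iff]
      constructor
      · intro h1; rw [← hlocal] at h1; exact h1 isUnit_one
      · intro J x hIJ hx hxJ
        have hux : IsUnit x := by by_contra h; exact hx ((hlocal x).mp h)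
        obtain ⟨b, hb⟩ := hux.exists_right_inv
        rw [← hb]; exact J.mul_mem_right b hxJ
    haveI := hmax
    letI : Field (R ⧸ Ideal.span {(2:R)}) := Ideal.Quotient.field _
    set mk : R →+* R ⧸ Ideal.span {(2:R)} := Ideal.Quotient.mk _ with hmkdef
    -- powers of mk ξ are distinct
    have hmkxne : ∀ k, mk ξ ^ k ≠ 0 := by
      intro k h
      rw [← map_pow, Ideal.Quotient.eq_zero_iff_mem] at h
      exact ((hlocal _).mpr h) (hξu.pow k)
    have hmkinj : ∀ j k : ℕ, j ≤ k → k - j < 2 ^ r - 1 → mk ξ ^ j = mk ξ ^ k → j = k := by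
      intro j k hjk hlt he
      rw [← map_pow, ← map_pow, Ideal.Quotient.eq] at he
      have hfac : ξ ^ j * (ξ ^ (k - j) - 1) ∈ Ideal.span {(2:R)} := by
        have hexp : ξ ^ j * (ξ ^ (k - j) - 1) = -(ξ ^ j - ξ ^ k) := by
          rw [mul_sub, mul_one, ← pow_add]
          have : j + (k - j) = k := by omega
          rw [this]; ring
        rw [hexp]
        exact neg_mem he
      rcases hmax.isPrime.mem_or_mem hfac with h | h
      · exact absurd (hξu.pow j) ((hlocal _).mpr h)
      · have hdvd := hkey _ h
        rcases Nat.eq_zero_or_pos (k - j) with h0 | h0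
        · omega
        · exact absurd (Nat.le_of_dvd h0 hdvd) (by omega)
    -- the trace polynomial
    set P : (R ⧸ Ideal.span {(2:R)})[X] := ∑ i ∈ range r, X ^ (2 ^ i) with hP
    have hPdeg : P.natDegree ≤ 2 ^ (r - 1) := by
      apply natDegree_sum_le_of_forall_le
      intro i hi
      rw [natDegree_X_pow]
      exact Nat.pow_le_pow_right (by norm_num) (by rw [mem_range] at hi; omega)
    have hPne : P ≠ 0 := by
      intro h0
      have hc : P.coeff 1 = 1 := by
        rw [hP, finset_sum_coeff]
        rw [Finset.sum_eq_single 0]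
        · simp
        · intro i hi hne
          rw [coeff_X_pow]
          have h2i : 2 ≤ 2 ^ i := by
            calc 2 = 2 ^ 1 := (pow_one 2).symm
            _ ≤ 2 ^ i := Nat.pow_le_pow_right (by norm_num) (by omega)
          rw [if_neg (by omega)]
        · intro h; exact absurd (mem_range.mpr (by omega)) h
      rw [h0] at hc
      simp at hc
    -- the root set
    set s : Finset (R ⧸ Ideal.span {(2:R)}) :=
      insert 0 ((range (2 ^ r - 1)).image (fun k => mk ξ ^ k)) with hs
    have himginj : Set.InjOn (fun k => mk ξ ^ k) (range (2 ^ r - 1)) := by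
      intro j hj k hk he
      simp only [mem_coe, mem_range] at hj hk
      rcases le_total j k with h | h
      · exact hmkinj j k h (by omega) he
      · exact (hmkinj k j h (by omega) he.symm).symm
    have hscard : 2 ^ (r - 1) < s.card := by
      rw [hs, card_insert_of_notMem, Finset.card_image_of_injOn himginj, card_range]
      · have h2r : 2 ^ r = 2 ^ (r - 1) * 2 := by
          rw [← pow_succ]; congr 1; omega
        have h1le : 1 ≤ 2 ^ (r-1) := Nat.one_le_two_pow
        omega
      · intro h
        obtain ⟨k, _, hk⟩ := mem_image.mp h
        exact hmkxne k hk
    have hiterpow : ∀ (i k : ℕ), (⇑φ)^[i] (ξ ^ k) = ξ ^ (k * 2 ^ i) := by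
      intro i
      induction i with
      | zero => intro k; simp
      | succ n ih =>
        intro k
        rw [Function.iterate_succ_apply]
        have hstep : φ (ξ ^ k) = ξ ^ (k * 2) := by
          rw [map_pow, hφ, ← pow_mul, mul_comm]
        rw [hstep, ih]
        congr 1
        rw [pow_succ]
        ring
    have heval : ∀ x ∈ s, P.eval x = 0 := by
      intro x hx
      rw [hs, mem_insert] at hx
      rcases hx with rfl | hx
      · rw [hP, eval_finset_sum]
        apply Finset.sum_eq_zero
        intro i _
        rw [eval_pow, eval_X]
        exact zero_pow (by positivity)
      · obtain ⟨k, _, rfl⟩ := mem_image.mp hx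
        rw [hP, eval_finset_sum]
        have hterm : ∀ i ∈ range r,
            eval (mk ξ ^ k) (X ^ 2 ^ i) = mk ((⇑φ)^[i] (ξ ^ k)) := by
          intro i _
          rw [eval_pow, eval_X, hiterpow, ← pow_mul, map_pow]
        rw [Finset.sum_congr rfl hterm, ← map_sum, ← hT (ξ ^ k)]
        exact Ideal.Quotient.eq_zero_iff_mem.mpr (htr2 _)
    exact hPne (eq_zero_of_natDegree_lt_card_of_eval_eq_zero' P s heval
      (lt_of_le_of_lt hPdeg hscard))
  -- pick a with χ a = -1
  obtain ⟨a, ha2, haT⟩ := hex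
  have hχa : χ a = -1 := by
    obtain ⟨y, hy⟩ := Ideal.mem_span_singleton.mp ((h2ann a).mp ha2)
    have hsplit : T a = T y + T y := by
      rw [hy, show (2:R) * y = y + y from two_mul y, hTadd]
    have h2cases : ∀ t : ZMod 4, t + t = 0 ∨ t + t = 2 := by decide
    rcases h2cases (T y) with h | h
    · exact absurd (by rw [hsplit, h]) haT
    · show Complex.I ^ (T a).val = -1
      rw [hsplit, h, show ((2 : ZMod 4)).val = 2 from rfl, Complex.I_sq]
  -- the annihilator finset
  set I2 : Finset R := univ.filter (fun x => 2 * x = 0) with hI2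
  have h0mem : (0:R) ∈ I2 := by simp [hI2]
  have hclosed : ∀ x ∈ I2, a + x ∈ I2 := by
    intro x hx
    simp only [hI2, mem_filter, mem_univ, true_and] at hx ⊢
    rw [mul_add, ha2, hx, add_zero]
  -- cardinality of I2
  have hcardI2 : I2.card = 2 ^ r := by
    set f : R →+ R := AddMonoidHom.mk' (fun x => 2 * x) (fun a b => mul_add 2 a b) with hf
    have hker : ∀ x : R, x ∈ f.ker ↔ 2 * x = 0 := by
      intro x; simp [hf, AddMonoidHom.mem_ker]
    have hkr : f.ker = f.range := by
      ext x
      rw [hker, AddMonoidHom.mem_range]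
      constructor
      · intro hx
        obtain ⟨c, hc⟩ := Ideal.mem_span_singleton.mp ((h2ann x).mp hx)
        exact ⟨c, hc.symm⟩
      · rintro ⟨y, rfl⟩
        show 2 * (2 * y) = 0
        rw [← mul_assoc, h4, zero_mul]
    have hq := AddSubgroup.card_eq_card_quotient_mul_card_addSubgroup f.ker
    have hqr : Nat.card (R ⧸ f.ker) = Nat.card f.range :=
      Nat.card_congr (QuotientAddGroup.quotientKerEquivRange f).toEquiv
    have hsq : Nat.card f.ker * Nat.card f.ker = 4 ^ r := by
      have : Nat.card R = 4 ^ r := by rw [Nat.card_eq_fintype_card, hcard]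
      rw [← this, hq, hqr, hkr]
    have hk2 : Nat.card f.ker = 2 ^ r := by
      have h42 : (4:ℕ) ^ r = 2 ^ r * 2 ^ r := by rw [← mul_pow]; norm_num
      rw [h42] at hsq
      have := congrArg Nat.sqrt hsq
      rwa [Nat.sqrt_eq, Nat.sqrt_eq] at this
    have hfin : Nat.card f.ker = I2.card := by
      rw [Nat.card_eq_fintype_card]
      rw [hI2]
      rw [Fintype.card_subtype]
      apply Finset.card_bij (fun x _ => x) <;> simp [hker]
    rw [← hfin, hk2]
  -- the image finset
  set E : Finset R := (range (2 ^ r - 1)).image (fun k => γ * ξ ^ k) with hE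
  have hEinj : Set.InjOn (fun k => γ * ξ ^ k) (range (2 ^ r - 1)) := by
    intro j hj k hk he
    simp only [mem_coe, mem_range] at hj hk
    rcases le_total j k with h | h
    · exact hcancel j k h (by omega) he
    · exact (hcancel k j h (by omega) he.symm).symm
  have hEcard : E.card = 2 ^ r - 1 := by
    rw [hE, card_image_of_injOn hEinj, card_range]
  have hEsub : E ⊆ I2.erase 0 := by
    intro x hx
    obtain ⟨k, _, rfl⟩ := mem_image.mp hx
    rw [mem_erase]
    constructor
    · intro h0
      obtain ⟨v, hv⟩ := (hξu.pow k).exists_right_inv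
      apply hγ0
      calc γ = γ * (ξ ^ k * v) := by rw [hv, mul_one]
      _ = (γ * ξ ^ k) * v := by ring
      _ = 0 := by rw [h0, zero_mul]
    · simp only [hI2, mem_filter, mem_univ, true_and]
      rw [hδ]
      linear_combination (δ * ξ ^ k) * h4
  have hEeq : E = I2.erase 0 := by
    apply Finset.eq_of_subset_of_card_le hEsub
    rw [card_erase_of_mem h0mem, hcardI2, hEcard]
  -- translation: sum over I2 vanishes
  have hS : ∑ x ∈ I2, χ x = 0 := by
    have himg : I2.image (fun x => a + x) = I2 := by
      apply Finset.eq_of_subset_of_card_le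
      · intro x hx
        obtain ⟨y, hy, rfl⟩ := mem_image.mp hx
        exact hclosed y hy
      · rw [card_image_of_injective _ (add_right_injective a)]
    have hstep : ∑ x ∈ I2, χ x = χ a * ∑ x ∈ I2, χ x := by
      calc ∑ x ∈ I2, χ x = ∑ x ∈ I2.image (fun x => a + x), χ x := by rw [himg]
      _ = ∑ x ∈ I2, χ (a + x) :=
          Finset.sum_image (fun x _ y _ h => by exact add_left_cancel h)
      _ = ∑ x ∈ I2, χ a * χ x := Finset.sum_congr rfl fun x _ => hχadd a x
      _ = χ a * ∑ x ∈ I2, χ x := by rw [mul_sum]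
    rw [hχa] at hstep
    have h2S : (2:ℂ) * ∑ x ∈ I2, χ x = 0 := by linear_combination hstep
    exact (mul_eq_zero.mp h2S).resolve_left two_ne_zero
  -- conclusion
  calc ∑ k ∈ Finset.range (2 ^ r - 1), Complex.I ^ (T (γ * ξ ^ k)).val
      = ∑ x ∈ E, χ x := by
        rw [hE, Finset.sum_image (fun x hx y hy h => hEinj (mem_coe.mpr hx) (mem_coe.mpr hy) h)]
    _ = ∑ x ∈ I2.erase 0, χ x := by rw [hEeq]
    _ = (∑ x ∈ I2, χ x) - χ 0 := Finset.sum_erase_eq_sub h0mem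
    _ = -1 := by rw [hS, hχ0]; ring
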